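/- Let n ≥ 2, θ ∈ ℝ, and fix ζ ∈ 𝕊 (the unit sphere). The function u(x) := (1-|x|²)^{1+2θ} / |x-ζ|^{n+2θ}, x ∈ 𝔹, satisfies L_θ[u] = 0 on 𝔹. Consequently, for any constant c, the kernel x ↦ c·(1-|x|²)^{1+2θ}/|x-ζ|^{n+2θ} also satisfies L_θ[u] = 0 on 𝔹. -/

import Mathlib

open MeasureTheory
open scoped BigOperators ENNReal Classical

noncomputable section

/-- Euclidean space `ℝⁿ`. -/
abbrev E (n : ℕ) := EuclideanSpace ℝ (Fin n)

/-- The open unit ball of `ℝⁿ`. -/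
def unitBall (n : ℕ) : Set (E n) := Metric.ball 0 1

/-- The Laplacian `Δf = ∑ ∂²f/∂xᵢ²`. -/
def lap {n : ℕ} (f : E n → ℂ) (x : E n) : ℂ :=
  ∑ i : Fin n,
    fderiv ℝ (fun y => fderiv ℝ f y (EuclideanSpace.single i 1)) x (EuclideanSpace.single i 1)

/-- The `N`-th iterate `Δ^N` of the Laplacian. -/
def lapIter {n : ℕ} (N : ℕ) (f : E n → ℂ) : E n → ℂ := lap^[N] f

/-- The radial derivative `R[u](x) = x ⋅ ∇u(x)`. -/
def radialDeriv {n : ℕ} (f : E n → ℂ) (x : E n) : ℂ := fderiv ℝ f x x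

/-- The operator `L_θ[u] = (1-|x|²) Δu + 4θ R[u] + 2θ(n-2-2θ) u`. -/
def Lop {n : ℕ} (θ : ℝ) (f : E n → ℂ) (x : E n) : ℂ :=
  ((1 - ‖x‖ ^ 2 : ℝ) : ℂ) * lap f x + ((4 * θ : ℝ) : ℂ) * radialDeriv f x
    + ((2 * θ * ((n : ℝ) - 2 - 2 * θ) : ℝ) : ℂ) * f x

/-- The multiplication operator `M^j[u](x) = (1-|x|²)^j u(x)` for integer `j`. -/
def Mnat {n : ℕ} (j : ℕ) (f : E n → ℂ) (x : E n) : ℂ :=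
  (((1 - ‖x‖ ^ 2) ^ j : ℝ) : ℂ) * f x

/-- The multiplication operator `M^λ[u](x) = (1-|x|²)^λ u(x)` for real `λ`. -/
def Mr {n : ℕ} (lam : ℝ) (f : E n → ℂ) (x : E n) : ℂ :=
  (((1 - ‖x‖ ^ 2) ^ lam : ℝ) : ℂ) * f x

/-- `u` is `N`-harmonic on the unit ball: `u` is `C^{2N}` there and `Δ^N u = 0`. -/
def NHarm (n N : ℕ) (u : E n → ℂ) : Prop :=
  ContDiffOn ℝ (2 * N : ℕ) u (unitBall n) ∧ ∀ x ∈ unitBall n, lapIter N u x = 0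

/-- `‖u‖_{p,α}^p = ∫_𝔹 |u|^p (1-|x|²)^α dV`, as a lower integral. -/
def wInt (n : ℕ) (p α : ℝ) (u : E n → ℂ) : ℝ≥0∞ :=
  ∫⁻ x in unitBall n, ENNReal.ofReal (‖u x‖ ^ p * (1 - ‖x‖ ^ 2) ^ α)

/-- Membership in `PH^p_{N,α}(𝔹)`. -/
def memPH (n N : ℕ) (p α : ℝ) (u : E n → ℂ) : Prop :=
  NHarm n N u ∧ wInt n p α u < ⊤

/-- The quantities `b_{j,N}(p)`. -/
def bCoef (n N j : ℕ) (p : ℝ) : ℝ :=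
  if j = 0 then -1 - ((N : ℝ) - 1) * p
  else max (-1 - ((N : ℝ) + (j : ℝ) - 1) * p) (-(n : ℝ) - ((N : ℝ) - (j : ℝ) - (n : ℝ) + 1) * p)

/-- The quantities `a_{j,N}(p)`. -/
def aCoef (n N j : ℕ) (p : ℝ) : ℝ :=
  min (bCoef n N j p) (-1 - ((N : ℝ) - (j : ℝ)) * p)

end


noncomputable section Stmt9Aux
set_option maxHeartbeats 2000000
open scoped RealInnerProductSpace

private lemma hasFDerivAt_S {n : ℕ} (y : E n) :
    HasFDerivAt (fun z : E n => 1 - ‖z‖ ^ 2) (-(2 • innerSL ℝ y)) y := by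
  simpa using ((hasStrictFDerivAt_norm_sq y).hasFDerivAt.const_sub 1)

private lemma hasFDerivAt_T {n : ℕ} (ζ y : E n) :
    HasFDerivAt (fun z : E n => ‖z - ζ‖ ^ 2) (2 • innerSL ℝ (y - ζ)) y := by
  simpa using ((hasFDerivAt_id y).sub_const ζ).norm_sq

private def D1 {n : ℕ} (p q : ℝ) (ζ y : E n) : E n →L[ℝ] ℝ :=
  (-(2*p) * ((1 - ‖y‖^2)^(p-1) * (‖y - ζ‖^2)^q)) • innerSL ℝ y
    + ((2*q) * ((1 - ‖y‖^2)^p * (‖y - ζ‖^2)^(q-1))) • innerSL ℝ (y - ζ)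

private lemma hasFDerivAt_U {n : ℕ} (p q : ℝ) (ζ y : E n)
    (hS : (1:ℝ) - ‖y‖^2 ≠ 0) (hT : ‖y - ζ‖^2 ≠ (0:ℝ)) :
    HasFDerivAt (fun z : E n => (1 - ‖z‖^2) ^ p * (‖z - ζ‖^2) ^ q) (D1 p q ζ y) y := by
  have h1 := ((hasFDerivAt_S y).rpow_const (p := p) (Or.inl hS))
  have h2 := ((hasFDerivAt_T ζ y).rpow_const (p := q) (Or.inl hT))
  have h := h1.mul h2
  refine h.congr_fderiv ?_
  ext w
  simp only [D1, ContinuousLinearMap.add_apply, ContinuousLinearMap.smul_apply,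
    ContinuousLinearMap.neg_apply, smul_eq_mul, nsmul_eq_mul, Nat.cast_ofNat]
  ring

private def Gfun (n : ℕ) (p q : ℝ) (ζ : E n) (i : Fin n) (y : E n) : ℝ :=
  (-(2*p) * ((1 - ‖y‖^2)^(p-1) * (‖y - ζ‖^2)^q)) * (y i)
  + ((2*q) * ((1 - ‖y‖^2)^p * (‖y - ζ‖^2)^(q-1))) * (y i - ζ i)

private def D2 {n : ℕ} (p q : ℝ) (ζ : E n) (i : Fin n) (x : E n) : E n →L[ℝ] ℝ :=
  ((-(2*p) * ((1 - ‖x‖^2)^(p-1) * (‖x - ζ‖^2)^q))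
      + (2*q) * ((1 - ‖x‖^2)^p * (‖x - ζ‖^2)^(q-1))) • EuclideanSpace.proj (𝕜 := ℝ) i
   + (4*p*(p-1) * ((1 - ‖x‖^2)^(p-2) * (‖x - ζ‖^2)^q) * (x i)
      + (-(4*p*q)) * ((1 - ‖x‖^2)^(p-1) * (‖x - ζ‖^2)^(q-1)) * (x i - ζ i)) • innerSL ℝ x
   + ((-(4*p*q)) * ((1 - ‖x‖^2)^(p-1) * (‖x - ζ‖^2)^(q-1)) * (x i)
      + 4*q*(q-1) * ((1 - ‖x‖^2)^p * (‖x - ζ‖^2)^(q-2)) * (x i - ζ i)) • innerSL ℝ (x - ζ)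

private lemma hasFDerivAt_G {n : ℕ} (p q : ℝ) (ζ x : E n) (i : Fin n)
    (hS : (1:ℝ) - ‖x‖^2 ≠ 0) (hT : ‖x - ζ‖^2 ≠ (0:ℝ)) :
    HasFDerivAt (Gfun n p q ζ i) (D2 p q ζ i x) x := by
  have hA := (((hasFDerivAt_S x).rpow_const (p := p - 1) (Or.inl hS)).mul
      ((hasFDerivAt_T ζ x).rpow_const (p := q) (Or.inl hT))).const_mul (-(2*p))
  have hB := (((hasFDerivAt_S x).rpow_const (p := p) (Or.inl hS)).mul
      ((hasFDerivAt_T ζ x).rpow_const (p := q - 1) (Or.inl hT))).const_mul (2*q)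
  have hproj : HasFDerivAt (fun y : E n => y i) (EuclideanSpace.proj (𝕜 := ℝ) i) x :=
    (EuclideanSpace.proj (𝕜 := ℝ) i).hasFDerivAt
  have hG := (hA.mul hproj).add (hB.mul (hproj.sub_const (ζ i)))
  have e1 : p - 1 - 1 = p - 2 := by ring
  have e2 : q - 1 - 1 = q - 2 := by ring
  rw [e1, e2] at hG
  refine hG.congr_fderiv ?_
  ext w
  simp only [D2, ContinuousLinearMap.add_apply, ContinuousLinearMap.smul_apply,
    ContinuousLinearMap.neg_apply, smul_eq_mul, innerSL_apply_apply, nsmul_eq_mul, Nat.cast_ofNat, Pi.mul_apply]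
  ring

private lemma inner_single {n : ℕ} (v : E n) (i : Fin n) :
    innerSL ℝ v (EuclideanSpace.single i 1) = v i := by
  rw [innerSL_apply_apply, EuclideanSpace.inner_single_right]; simp

private lemma D1_single {n : ℕ} (p q : ℝ) (ζ y : E n) (i : Fin n) :
    D1 p q ζ y (EuclideanSpace.single i 1) = Gfun n p q ζ i y := by
  simp only [D1, Gfun, ContinuousLinearMap.add_apply, ContinuousLinearMap.smul_apply,
    smul_eq_mul, inner_single]
  simp [PiLp.sub_apply]

private lemma D1_self {n : ℕ} (p q : ℝ) (ζ x : E n) :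
    D1 p q ζ x x = (-(2*p) * ((1 - ‖x‖^2)^(p-1) * (‖x - ζ‖^2)^q)) * (∑ i, x i * x i)
      + ((2*q) * ((1 - ‖x‖^2)^p * (‖x - ζ‖^2)^(q-1))) * (∑ i, (x i - ζ i) * x i) := by
  simp only [D1, ContinuousLinearMap.add_apply, ContinuousLinearMap.smul_apply, smul_eq_mul,
    innerSL_apply_apply]
  simp only [PiLp.inner_apply, RCLike.inner_apply, conj_trivial, PiLp.sub_apply]
  congr 2; exact Finset.sum_congr rfl fun i _ => mul_comm _ _

private lemma D2_single {n : ℕ} (p q : ℝ) (ζ x : E n) (i : Fin n) :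
    D2 p q ζ i x (EuclideanSpace.single i 1) =
      ((-(2*p) * ((1 - ‖x‖^2)^(p-1) * (‖x - ζ‖^2)^q))
          + (2*q) * ((1 - ‖x‖^2)^p * (‖x - ζ‖^2)^(q-1)))
       + (4*p*(p-1) * ((1 - ‖x‖^2)^(p-2) * (‖x - ζ‖^2)^q) * (x i)
          + (-(4*p*q)) * ((1 - ‖x‖^2)^(p-1) * (‖x - ζ‖^2)^(q-1)) * (x i - ζ i)) * (x i)
       + ((-(4*p*q)) * ((1 - ‖x‖^2)^(p-1) * (‖x - ζ‖^2)^(q-1)) * (x i)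
          + 4*q*(q-1) * ((1 - ‖x‖^2)^p * (‖x - ζ‖^2)^(q-2)) * (x i - ζ i)) * (x i - ζ i) := by
  simp only [D2, ContinuousLinearMap.add_apply, ContinuousLinearMap.smul_apply,
    smul_eq_mul, inner_single]
  simp [PiLp.sub_apply]

private lemma Ueq {n : ℕ} (θ : ℝ) (ζ y : E n) :
    ((1 - ‖y‖^2)^(1 + 2*θ) / ‖y - ζ‖^((n:ℝ) + 2*θ) : ℝ)
      = (1 - ‖y‖^2)^(1 + 2*θ) * (‖y - ζ‖^2)^(-(((n:ℝ)) + 2*θ)/2) := by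
  rw [div_eq_mul_inv, ← Real.rpow_neg (norm_nonneg _)]
  congr 1
  rw [← Real.rpow_natCast (‖y - ζ‖) 2, ← Real.rpow_mul (norm_nonneg _)]
  congr 1; push_cast; ring

private lemma sum_quad {n : ℕ} (P a b d : ℝ) (x ζ : E n) :
    ∑ i : Fin n, (P + (a * x i + b * (x i - ζ i)) * x i
        + (b * x i + d * (x i - ζ i)) * (x i - ζ i))
      = (n : ℝ) * P + (a + 2*b + d) * (∑ i, x i * x i)
        + (-(2*b) - 2*d) * (∑ i, x i * ζ i) + d * (∑ i, ζ i * ζ i) := by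
  have : ∀ i : Fin n, (P + (a * x i + b * (x i - ζ i)) * x i
        + (b * x i + d * (x i - ζ i)) * (x i - ζ i))
      = P + ((a + 2*b + d) * (x i * x i) + ((-(2*b) - 2*d) * (x i * ζ i)
          + d * (ζ i * ζ i))) := fun i => by ring
  rw [Finset.sum_congr rfl (fun i _ => this i)]
  rw [Finset.sum_add_distrib, Finset.sum_add_distrib, Finset.sum_add_distrib,
    Finset.sum_const, ← Finset.mul_sum, ← Finset.mul_sum, ← Finset.mul_sum,
    Finset.card_univ, Fintype.card_fin, nsmul_eq_mul]
  ring

private lemma key (n : ℕ) (θ : ℝ) (ζ : E n) (hζ : ‖ζ‖ = 1) (c : ℂ) (x : E n)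
    (hx : x ∈ unitBall n) :
    Lop θ (fun y => c * (((1 - ‖y‖^2)^(1 + 2*θ) / ‖y - ζ‖^((n:ℝ) + 2*θ) : ℝ) : ℂ)) x = 0 := by
  have hfun : (fun y : E n => c * (((1 - ‖y‖^2)^(1 + 2*θ) / ‖y - ζ‖^((n:ℝ) + 2*θ) : ℝ) : ℂ))
      = fun y : E n => c * (((1 - ‖y‖^2)^(1 + 2*θ)
          * (‖y - ζ‖^2)^(-(((n:ℝ)) + 2*θ)/2) : ℝ) : ℂ) := by
    funext y; rw [Ueq]
  rw [hfun]
  have hball : ∀ y : E n, y ∈ unitBall n → (0 < 1 - ‖y‖^2 ∧ 0 < ‖y - ζ‖^2) := by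
    intro y hy
    have h1 : ‖y‖ < 1 := by simpa [unitBall, mem_ball_zero_iff] using hy
    constructor
    · nlinarith [norm_nonneg y]
    · have hne : y ≠ ζ := by rintro rfl; rw [hζ] at h1; exact lt_irrefl 1 h1
      have h2 : ‖y - ζ‖ ≠ 0 := by simpa [sub_eq_zero] using hne
      positivity
  set f : E n → ℂ := fun y : E n => c * (((1 - ‖y‖^2)^(1 + 2*θ)
      * (‖y - ζ‖^2)^(-(((n:ℝ)) + 2*θ)/2) : ℝ) : ℂ) with hfdef
  have hf : ∀ y ∈ unitBall n, HasFDerivAt f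
      (c • ((Complex.ofRealCLM : ℝ →L[ℝ] ℂ).comp
        (D1 (1 + 2*θ) (-(((n:ℝ)) + 2*θ)/2) ζ y))) y := by
    intro y hy
    obtain ⟨h1, h2⟩ := hball y hy
    exact (Complex.ofRealCLM.hasFDerivAt.comp y
      (hasFDerivAt_U _ _ ζ y h1.ne' h2.ne')).const_mul c
  have hf1 : ∀ y ∈ unitBall n, ∀ i : Fin n,
      fderiv ℝ f y (EuclideanSpace.single i 1)
        = c * ((Gfun n (1 + 2*θ) (-(((n:ℝ)) + 2*θ)/2) ζ i y : ℝ) : ℂ) := by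
    intro y hy i
    rw [(hf y hy).fderiv]
    simp only [ContinuousLinearMap.smul_apply, ContinuousLinearMap.coe_comp', Function.comp_apply,
      Complex.ofRealCLM_apply, smul_eq_mul, D1_single]
  have hmem : unitBall n ∈ nhds x := (Metric.isOpen_ball).mem_nhds hx
  obtain ⟨hSx, hTx⟩ := hball x hx
  have hlap : lap f x = c * ((∑ i : Fin n,
      D2 (1 + 2*θ) (-(((n:ℝ)) + 2*θ)/2) ζ i x (EuclideanSpace.single i 1) : ℝ) : ℂ) := by
    unfold lap
    rw [Complex.ofReal_sum, Finset.mul_sum]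
    refine Finset.sum_congr rfl fun i _ => ?_
    have hev : (fun y => fderiv ℝ f y (EuclideanSpace.single i 1)) =ᶠ[nhds x]
        (fun y => c * ((Gfun n (1 + 2*θ) (-(((n:ℝ)) + 2*θ)/2) ζ i y : ℝ) : ℂ)) :=
      Filter.eventuallyEq_of_mem hmem (fun y hy => hf1 y hy i)
    rw [hev.fderiv_eq]
    have hG2 : HasFDerivAt
        (fun y => c * ((Gfun n (1 + 2*θ) (-(((n:ℝ)) + 2*θ)/2) ζ i y : ℝ) : ℂ))
        (c • ((Complex.ofRealCLM : ℝ →L[ℝ] ℂ).comp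
          (D2 (1 + 2*θ) (-(((n:ℝ)) + 2*θ)/2) ζ i x))) x :=
      (Complex.ofRealCLM.hasFDerivAt.comp x
        (hasFDerivAt_G _ _ ζ x i hSx.ne' hTx.ne')).const_mul c
    rw [hG2.fderiv]
    simp only [ContinuousLinearMap.smul_apply, ContinuousLinearMap.coe_comp',
      Function.comp_apply, Complex.ofRealCLM_apply, smul_eq_mul]
  have hrad : radialDeriv f x
      = c * ((D1 (1 + 2*θ) (-(((n:ℝ)) + 2*θ)/2) ζ x x : ℝ) : ℂ) := by
    unfold radialDeriv
    rw [(hf x hx).fderiv]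
    simp only [ContinuousLinearMap.smul_apply, ContinuousLinearMap.coe_comp',
      Function.comp_apply, Complex.ofRealCLM_apply, smul_eq_mul]
  have hzero : ((1 - ‖x‖^2) * (∑ i : Fin n,
        D2 (1 + 2*θ) (-(((n:ℝ)) + 2*θ)/2) ζ i x (EuclideanSpace.single i 1))
      + (4*θ) * (D1 (1 + 2*θ) (-(((n:ℝ)) + 2*θ)/2) ζ x x)
      + (2*θ*((n:ℝ) - 2 - 2*θ)) * ((1 - ‖x‖^2)^(1 + 2*θ)
          * (‖x - ζ‖^2)^(-(((n:ℝ)) + 2*θ)/2)) : ℝ) = 0 := by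
    have hZZ : ∑ i, ζ i * ζ i = 1 := by
      have h : ‖ζ‖^2 = ∑ i, ζ i * ζ i := by
        rw [← real_inner_self_eq_norm_sq]; simp only [PiLp.inner_apply, RCLike.inner_apply, conj_trivial]
      rw [← h, hζ]; norm_num
    have hXX : ‖x‖^2 = ∑ i, x i * x i := by
      rw [← real_inner_self_eq_norm_sq]; simp only [PiLp.inner_apply, RCLike.inner_apply, conj_trivial]
    have hTT : ‖x - ζ‖^2 = ∑ i, x i * x i - 2*(∑ i, x i * ζ i) + 1 := by
      rw [← real_inner_self_eq_norm_sq]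
      calc (inner ℝ (x - ζ) (x - ζ) : ℝ) = ∑ i, (x i - ζ i) * (x i - ζ i) := by
            simp only [PiLp.inner_apply, RCLike.inner_apply, conj_trivial, PiLp.sub_apply]
        _ = ∑ i, (x i * x i - 2*(x i * ζ i) + ζ i * ζ i) :=
            Finset.sum_congr rfl fun i _ => by ring
        _ = ∑ i, x i * x i - 2*(∑ i, x i * ζ i) + 1 := by
            rw [Finset.sum_add_distrib, Finset.sum_sub_distrib, ← Finset.mul_sum, hZZ]
    have hWX : ∑ i, (x i - ζ i) * x i = ∑ i, x i * x i - ∑ i, x i * ζ i := by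
      rw [← Finset.sum_sub_distrib]; exact Finset.sum_congr rfl fun i _ => by ring
    have eS1 : (1 - ‖x‖^2)^(1+2*θ-1) = (1 - ‖x‖^2)^(1+2*θ) / (1 - ‖x‖^2) := by
      rw [Real.rpow_sub hSx, Real.rpow_one]
    have eS2 : (1 - ‖x‖^2)^(1+2*θ-2) = (1 - ‖x‖^2)^(1+2*θ) / (1 - ‖x‖^2)^(2:ℕ) := by
      rw [Real.rpow_sub hSx, show ((2:ℝ)) = ((2:ℕ):ℝ) by norm_num, Real.rpow_natCast]
    have eT1 : (‖x - ζ‖^2)^(-(((n:ℝ)) + 2*θ)/2 - 1)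
        = (‖x - ζ‖^2)^(-(((n:ℝ)) + 2*θ)/2) / (‖x - ζ‖^2) := by
      rw [Real.rpow_sub hTx, Real.rpow_one]
    have eT2 : (‖x - ζ‖^2)^(-(((n:ℝ)) + 2*θ)/2 - 2)
        = (‖x - ζ‖^2)^(-(((n:ℝ)) + 2*θ)/2) / (‖x - ζ‖^2)^(2:ℕ) := by
      rw [Real.rpow_sub hTx, show ((2:ℝ)) = ((2:ℕ):ℝ) by norm_num, Real.rpow_natCast]
    simp only [D2_single, D1_self]
    rw [sum_quad, hWX, hZZ, eS1, eS2, eT1, eT2]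
    rw [hTT, hXX]
    have h1 : (1 - ∑ i, x i * x i) ≠ 0 := by rw [← hXX]; exact hSx.ne'
    have h2 : (∑ i, x i * x i - 2*(∑ i, x i * ζ i) + 1) ≠ 0 := by rw [← hTT]; exact hTx.ne'
    generalize (∑ i, x i * x i) = s at h1 h2 ⊢
    generalize (∑ i, x i * ζ i) = t at h2 ⊢
    field_simp
    ring
  unfold Lop
  rw [hlap, hrad, hfdef]
  have hzC : ((((1 - ‖x‖^2) * (∑ i : Fin n,
        D2 (1 + 2*θ) (-(((n:ℝ)) + 2*θ)/2) ζ i x (EuclideanSpace.single i 1))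
      + (4*θ) * (D1 (1 + 2*θ) (-(((n:ℝ)) + 2*θ)/2) ζ x x)
      + (2*θ*((n:ℝ) - 2 - 2*θ)) * ((1 - ‖x‖^2)^(1 + 2*θ)
          * (‖x - ζ‖^2)^(-(((n:ℝ)) + 2*θ)/2))) : ℝ) : ℂ) = 0 := by
    exact_mod_cast hzero
  push_cast
  push_cast at hzC
  linear_combination (c : ℂ) * hzC

end Stmt9Aux

/-- the generalized Poisson kernel `(1-|x|²)^{1+2θ}/|x-ζ|^{n+2θ}`
solves `L_θ[u] = 0`, as does any constant multiple of it. -/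
theorem stmt9 (n : ℕ) (hn : 2 ≤ n) (θ : ℝ) (ζ : E n) (hζ : ‖ζ‖ = 1) :
    (∀ x ∈ unitBall n,
      Lop θ (fun y => (((1 - ‖y‖ ^ 2) ^ (1 + 2 * θ) / ‖y - ζ‖ ^ ((n : ℝ) + 2 * θ) : ℝ) : ℂ))
        x = 0) ∧
    (∀ c : ℂ, ∀ x ∈ unitBall n,
      Lop θ
        (fun y => c * (((1 - ‖y‖ ^ 2) ^ (1 + 2 * θ) / ‖y - ζ‖ ^ ((n : ℝ) + 2 * θ) : ℝ) : ℂ))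
        x = 0) := by
  refine ⟨?_, ?_⟩
  · intro x hx
    have hfun : (fun y : E n =>
        (((1 - ‖y‖ ^ 2) ^ (1 + 2 * θ) / ‖y - ζ‖ ^ ((n : ℝ) + 2 * θ) : ℝ) : ℂ))
        = fun y : E n => (1:ℂ) *
          (((1 - ‖y‖ ^ 2) ^ (1 + 2 * θ) / ‖y - ζ‖ ^ ((n : ℝ) + 2 * θ) : ℝ) : ℂ) :=
      funext fun y => (one_mul _).symm
    rw [hfun]
    exact key n θ ζ hζ 1 x hx
  · intro c x hx
    exact key n θ ζ hζ c x hx
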